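/- Let (G,d₀) be a countably generated nonarchimedean normed chain complex over K with finite boundary depth β. Then range d₀ is closed, H := ker d₀ / range d₀ with the quotient norm is a nonarchimedean Banach space, and for every ε > 0 there exist special deformation retraction data (p, i, h) from (G, d₀) to (H, 0) (H regarded as a chain complex with zero differential) such that: p(x) equals the homology class of x in H for every x ∈ ker d₀; ‖p(x)‖ ≤ e^ε·‖x‖ and ‖h(x)‖ ≤ e^{β+ε}·‖x‖ for all x ∈ G; and ‖i(z)‖ ≤ e^ε·‖z‖ for all z ∈ H. -/

import Mathlib

open scoped ENNReal

open Classical in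
/-- The boundary depth `β(C,d) ∈ [0,∞]` of a norm-nonincreasing differential `d` on a
nonarchimedean normed chain complex `C`. -/
noncomputable def boundaryDepth {C : Type*} [NormedAddCommGroup C] (d : C → C) : ℝ≥0∞ :=
  if ∀ x, d x = 0 then 0
  else
    ⨆ x ∈ {x : C | x ≠ 0 ∧ ∃ y, d y = x},
      ⨅ y ∈ {y : C | d y = x}, ENNReal.ofReal (Real.log ‖y‖ - Real.log ‖x‖)

/-- The homology `ker d / range d` of a chain complex `(C,d)`, with the quotient
(semi)norm. -/
abbrev homologyOf {K : Type*} [NormedField K] {C : Type*} [NormedAddCommGroup C]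
    [NormedSpace K C] (d : C →L[K] C) : Type _ :=
  ↥(LinearMap.ker (d : C →ₗ[K] C)) ⧸ Submodule.comap (LinearMap.ker (d : C →ₗ[K] C)).subtype (LinearMap.range (d : C →ₗ[K] C))

section AuxA

variable {K : Type*} [NormedField K] {G : Type*} [NormedAddCommGroup G] [NormedSpace K G]

lemma aux_norm_ge (F : Submodule K G) (v : G) (a : K) (f : G) (hf : f ∈ F) :
    ‖a‖ * Metric.infDist v (F : Set G) ≤ ‖f + a • v‖ := by
  rcases eq_or_ne a 0 with rfl | ha
  · simpa using norm_nonneg (f + (0 : K) • v)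
  · have h1 : f + a • v = a • (a⁻¹ • f + v) := by
      rw [smul_add, smul_smul, mul_inv_cancel₀ ha, one_smul]
    rw [h1, norm_smul]
    refine mul_le_mul_of_nonneg_left ?_ (norm_nonneg a)
    have hm : -(a⁻¹ • f) ∈ (F : Set G) := F.neg_mem (F.smul_mem _ hf)
    calc Metric.infDist v (F : Set G) ≤ dist v (-(a⁻¹ • f)) :=
          Metric.infDist_le_dist_of_mem hm
      _ = ‖a⁻¹ • f + v‖ := by
          rw [dist_eq_norm, sub_neg_eq_add, add_comm]

lemma aux_isClosed_sup [CompleteSpace K] {F : Submodule K G} (hF : IsClosed (F : Set G)) (v : G) :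
    IsClosed ((F ⊔ (K ∙ v) : Submodule K G) : Set G) := by
  by_cases hv : v ∈ F
  · rw [sup_eq_left.mpr ((Submodule.span_singleton_le_iff_mem v F).mpr hv)]
    exact hF
  · have hFne : (F : Set G).Nonempty := ⟨0, F.zero_mem⟩
    have hδ : 0 < Metric.infDist v (F : Set G) :=
      (hF.notMem_iff_infDist_pos hFne).mp hv
    set δ := Metric.infDist v (F : Set G) with hδdef
    refine IsSeqClosed.isClosed ?_
    intro u x hu hx
    have hrep : ∀ n, ∃ f ∈ F, ∃ a : K, u n = f + a • v := by
      intro n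
      rcases Submodule.mem_sup.mp (hu n) with ⟨f, hf, w, hw, hfw⟩
      rcases Submodule.mem_span_singleton.mp hw with ⟨a, ha⟩
      exact ⟨f, hf, a, by rw [← hfw, ← ha]⟩
    choose fs hfs as has using hrep
    have hcu : CauchySeq u := hx.cauchySeq
    have hca : CauchySeq as := by
      rw [Metric.cauchySeq_iff] at hcu ⊢
      intro ε hε
      obtain ⟨N, hN⟩ := hcu (ε * δ) (mul_pos hε hδ)
      refine ⟨N, fun m hm n hn => ?_⟩
      have key : ‖as m - as n‖ * δ ≤ ‖u m - u n‖ := by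
        have hsub : u m - u n = (fs m - fs n) + (as m - as n) • v := by
          rw [has m, has n, sub_smul]; abel
        rw [hsub]
        exact aux_norm_ge F v _ _ (F.sub_mem (hfs m) (hfs n))
      have hlt := hN m hm n hn
      rw [dist_eq_norm] at hlt ⊢
      have : ‖as m - as n‖ * δ < ε * δ := lt_of_le_of_lt key hlt
      exact lt_of_mul_lt_mul_right (by linarith) (le_of_lt hδ)
    obtain ⟨a, ha⟩ := cauchySeq_tendsto_of_complete hca
    have hfv : Filter.Tendsto (fun n => u n - as n • v) Filter.atTop (nhds (x - a • v)) :=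
      hx.sub (ha.smul_const v)
    have hmem : x - a • v ∈ F := by
      refine hF.mem_of_tendsto hfv (Filter.Eventually.of_forall fun n => ?_)
      have : u n - as n • v = fs n := by rw [has n]; abel
      rw [this]; exact hfs n
    exact Submodule.mem_sup.mpr ⟨x - a • v, hmem, a • v,
      Submodule.mem_span_singleton.mpr ⟨a, rfl⟩, by abel⟩

lemma aux_extend [CompleteSpace G] (U : Submodule K G) (hU : Dense (U : Set G))
    (f : ↥U →L[K] G) : ∃ P : G →L[K] G, ∀ x : ↥U, P (x : G) = f x := by
  have h_e : IsUniformInducing ((↑) : ↥U → G) :=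
    isUniformEmbedding_subtype_val.isUniformInducing
  have h_dense : DenseRange ((↑) : ↥U → G) := hU.denseRange_val
  have h_f : UniformContinuous f := f.uniformContinuous
  have cont : Continuous ((h_e.isDenseInducing h_dense).extend f) :=
    (uniformContinuous_uniformly_extend h_e h_dense h_f).continuous
  set ψ : G → G := (h_e.isDenseInducing h_dense).extend f with hψ
  have heq : ∀ x : ↥U, ψ (x : G) = f x := fun x =>
    uniformly_extend_of_ind h_e h_dense h_f x
  have hadd : ∀ x y : G, ψ (x + y) = ψ x + ψ y := by
    refine fun x y => DenseRange.induction_on₂ h_dense ?_ (fun a b => ?_) x y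
    · exact isClosed_eq (cont.comp continuous_add)
        ((cont.comp continuous_fst).add (cont.comp continuous_snd))
    · rw [← Submodule.coe_add, heq, heq, heq, map_add]
  have hsmul : ∀ (c : K) (x : G), ψ (c • x) = c • ψ x := by
    refine fun c x => DenseRange.induction_on h_dense x ?_ (fun a => ?_)
    · exact isClosed_eq (cont.comp (continuous_const_smul c))
        ((continuous_const_smul c).comp cont)
    · rw [← Submodule.coe_smul, heq, heq, map_smul]
  refine ⟨⟨{ toFun := ψ, map_add' := hadd, map_smul' := hsmul }, cont⟩, heq⟩

end AuxA

section AuxDepth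

lemma aux_depth {G : Type*} [NormedAddCommGroup G] (d : G → G) {β : ℝ}
    (hβ : boundaryDepth d = ENNReal.ofReal β) (hβ0 : 0 ≤ β)
    {x : G} (hx : x ≠ 0) (hxr : ∃ y, d y = x) {δ : ℝ} (hδ : 0 < δ) :
    ∃ y, d y = x ∧ ‖y‖ ≤ Real.exp (β + δ) * ‖x‖ := by
  classical
  by_cases hd : ∀ z, d z = 0
  · obtain ⟨y, hy⟩ := hxr
    exact absurd ((hd y) ▸ hy).symm hx
  · have hsup : boundaryDepth d =
        ⨆ z ∈ {z : G | z ≠ 0 ∧ ∃ y, d y = z},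
          ⨅ y ∈ {y : G | d y = z}, ENNReal.ofReal (Real.log ‖y‖ - Real.log ‖z‖) := by
      rw [boundaryDepth, if_neg hd]
    have h1 : (⨅ y ∈ {y : G | d y = x}, ENNReal.ofReal (Real.log ‖y‖ - Real.log ‖x‖))
        ≤ ENNReal.ofReal β := by
      rw [← hβ, hsup]
      exact le_iSup₂ (f := fun z (_ : z ∈ {z : G | z ≠ 0 ∧ ∃ y, d y = z}) =>
        ⨅ y ∈ {y : G | d y = z}, ENNReal.ofReal (Real.log ‖y‖ - Real.log ‖z‖)) x ⟨hx, hxr⟩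
    have h2 : (⨅ y ∈ {y : G | d y = x}, ENNReal.ofReal (Real.log ‖y‖ - Real.log ‖x‖))
        < ENNReal.ofReal (β + δ) :=
      lt_of_le_of_lt h1 ((ENNReal.ofReal_lt_ofReal_iff (by linarith)).mpr (by linarith))
    obtain ⟨y, hy⟩ := iInf_lt_iff.mp h2
    obtain ⟨hyx, hylt⟩ := iInf_lt_iff.mp hy
    have hlog : Real.log ‖y‖ - Real.log ‖x‖ < β + δ := by
      by_contra hcon
      push_neg at hcon
      exact absurd (lt_of_le_of_lt (ENNReal.ofReal_le_ofReal hcon) hylt) (lt_irrefl _)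
    refine ⟨y, hyx, ?_⟩
    rcases eq_or_ne y 0 with rfl | hy0
    · have : (0:ℝ) < Real.exp (β + δ) * ‖x‖ :=
        mul_pos (Real.exp_pos _) (norm_pos_iff.mpr hx)
      simpa using le_of_lt this
    · have hxn : (0:ℝ) < ‖x‖ := norm_pos_iff.mpr hx
      have hyn : (0:ℝ) < ‖y‖ := norm_pos_iff.mpr hy0
      have : Real.log ‖y‖ < (β + δ) + Real.log ‖x‖ := by linarith
      have hexp := Real.exp_lt_exp.mpr this
      rw [Real.exp_log hyn, Real.exp_add, Real.exp_log hxn] at hexp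
      exact le_of_lt hexp

lemma aux_closed_range {K : Type*} [NormedField K] {G : Type*} [NormedAddCommGroup G]
    [NormedSpace K G] [CompleteSpace G]
    (d : G →L[K] G) (hd1 : ∀ x, ‖d x‖ ≤ ‖x‖) {β : ℝ} (hβ0 : 0 ≤ β)
    (hβ : boundaryDepth (fun x : G => d x) = ENNReal.ofReal β) :
    IsClosed ((LinearMap.range (d : G →ₗ[K] G) : Submodule K G) : Set G) := by
  set f : NormedAddGroupHom G G :=
    { toFun := fun x => d x, map_add' := fun a b => map_add d a b,
      bound' := ⟨1, fun x => by simpa using hd1 x⟩ } with hfdef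
  set A : AddSubgroup G := (LinearMap.range (d : G →ₗ[K] G) : Submodule K G).toAddSubgroup with hAdef
  have hsurj : f.SurjectiveOnWith A (Real.exp (β + 1)) := by
    intro x hx
    rcases eq_or_ne x 0 with rfl | hx0
    · exact ⟨0, by simpa using (map_zero d), by simp⟩
    · have hxr : ∃ y, d y = x := by
        rcases hx with ⟨y, hy⟩
        exact ⟨y, hy⟩
      obtain ⟨y, hy, hb⟩ := aux_depth (fun x : G => d x) hβ hβ0 hx0 hxr one_pos
      exact ⟨y, hy, hb⟩
  have h2 := controlled_closure_of_complete (Real.exp_pos (β+1)) one_pos hsurj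
  refine isClosed_of_closure_subset ?_
  intro x hx
  have hxc : x ∈ A.topologicalClosure := by
    exact hx
  obtain ⟨y, hy, -⟩ := h2 x hxc
  exact ⟨y, hy⟩

end AuxDepth

section AuxB

variable {K : Type*} [NormedField K] {G : Type*} [NormedAddCommGroup G] [NormedSpace K G]


variable {K : Type*} [NormedField K] {G : Type*} [NormedAddCommGroup G] [NormedSpace K G]

set_option maxHeartbeats 1000000 in
theorem aux_exists_proj [CompleteSpace K] [CompleteSpace G] [IsUltrametricDist G]
    (hgen : ∃ s : Set G, s.Countable ∧ Dense ((Submodule.span K s : Submodule K G) : Set G))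
    (S : Submodule K G) (hS : IsClosed (S : Set G)) {ε : ℝ} (hε : 0 < ε) :
    ∃ P : G →L[K] G, (∀ x ∈ S, P x = x) ∧ (∀ x, P x ∈ S) ∧ ∀ x, ‖P x‖ ≤ Real.exp ε * ‖x‖ := by
  classical
  obtain ⟨s, hsc, hsd⟩ := hgen
  obtain ⟨v, hv⟩ := (hsc.insert 0).exists_eq_range (Set.insert_nonempty 0 s)
  set F : ℕ → Submodule K G := fun n => S ⊔ Submodule.span K (v '' Set.Iio n) with hFdef
  have hF0 : F 0 = S := by
    have : Set.Iio (0 : ℕ) = (∅ : Set ℕ) := by ext k; simp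
    simp [hFdef, this]
  have hFsucc : ∀ n, F (n + 1) = F n ⊔ (K ∙ v n) := by
    intro n
    have hio : Set.Iio (n + 1) = insert n (Set.Iio n) := by
      ext k; simp [Nat.lt_succ_iff_lt_or_eq]
    show S ⊔ Submodule.span K (v '' Set.Iio (n+1)) = (S ⊔ Submodule.span K (v '' Set.Iio n)) ⊔ (K ∙ v n)
    rw [hio, Set.image_insert_eq, Submodule.span_insert, sup_comm (K ∙ v n) _, ← sup_assoc]
  have hSF : ∀ n, S ≤ F n := fun n => le_sup_left
  have hFmono : Monotone F := monotone_nat_of_le_succ (fun n => by rw [hFsucc]; exact le_sup_left)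
  have hFclosed : ∀ n, IsClosed ((F n : Submodule K G) : Set G) := by
    intro n
    induction n with
    | zero => rw [hF0]; exact hS
    | succ n ih => rw [hFsucc]; exact aux_isClosed_sup ih (v n)
  set C : ℕ → ℝ := fun n => Real.exp (ε * (1 - (1/2)^n)) with hCdef
  have hC1 : ∀ n, 1 ≤ C n := by
    intro n
    refine Real.one_le_exp ?_
    have h2 : (1/2 : ℝ)^n ≤ 1 := pow_le_one₀ (by norm_num) (by norm_num)
    nlinarith
  have hCle : ∀ n, C n ≤ Real.exp ε := by
    intro n
    refine Real.exp_le_exp.mpr ?_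
    have h2 : (0:ℝ) ≤ (1/2 : ℝ)^n := by positivity
    nlinarith
  have hCstep : ∀ n, C n * Real.exp (ε * (1/2)^(n+1)) = C (n+1) := by
    intro n
    rw [hCdef, ← Real.exp_add]
    congr 1
    have : (1/2 : ℝ)^(n+1) = (1/2)^n * (1/2) := pow_succ _ _
    rw [this]; ring
  have hCmono : ∀ n, C n ≤ C (n+1) := by
    intro n
    rw [← hCstep n]
    nlinarith [Real.one_le_exp (show (0:ℝ) ≤ ε * (1/2)^(n+1) by positivity),
      Real.exp_pos (ε * (1 - (1/2)^n)), hC1 n]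
  set Props : ℕ → (G →ₗ[K] G) → Prop := fun n f =>
    (∀ x ∈ S, f x = x) ∧ (∀ x ∈ F n, f x ∈ S) ∧ ∀ x ∈ F n, ‖f x‖ ≤ C n * ‖x‖ with hProps
  have base : Props 0 LinearMap.id := by
    refine ⟨fun x _ => rfl, ?_, ?_⟩
    · rw [hF0]; exact fun x hx => hx
    · intro x hx
      simpa using le_mul_of_one_le_left (norm_nonneg x) (hC1 0)
  have step : ∀ n (f : G →ₗ[K] G), Props n f →
      ∃ f' : G →ₗ[K] G, Props (n+1) f' ∧ ∀ x ∈ F n, f' x = f x := by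
    intro n f hf
    obtain ⟨hfix, hmem, hbd⟩ := hf
    by_cases hvn : v n ∈ F n
    · have hEq : F (n+1) = F n := by
        rw [hFsucc n, sup_eq_left.mpr ((Submodule.span_singleton_le_iff_mem _ _).mpr hvn)]
      refine ⟨f, ⟨hfix, ?_, ?_⟩, fun x _ => rfl⟩
      · rw [hEq]; exact hmem
      · rw [hEq]
        exact fun x hx => le_trans (hbd x hx)
          (mul_le_mul_of_nonneg_right (hCmono n) (norm_nonneg x))
    · have hδ : 0 < Metric.infDist (v n) ((F n : Submodule K G) : Set G) :=
        ((hFclosed n).notMem_iff_infDist_pos ⟨0, (F n).zero_mem⟩).mp hvn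
      set δ := Metric.infDist (v n) ((F n : Submodule K G) : Set G) with hδdef
      set η := ε * (1/2)^(n+1) with hηdef
      have hη0 : 0 < η := by positivity
      have h1η : 1 < Real.exp η := by
        rw [← Real.exp_zero]; exact Real.exp_lt_exp.mpr hη0
      obtain ⟨u, huF, hud⟩ := (Metric.infDist_lt_iff ⟨0, (F n).zero_mem⟩).mp
        (show δ < Real.exp η * δ from lt_mul_of_one_lt_left hδ h1η)
      -- linear functional vanishing on F n with value 1 at v n
      have hvq : (Submodule.Quotient.mk (v n) : G ⧸ F n) ≠ 0 := by
        simpa [Submodule.Quotient.mk_eq_zero] using hvn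
      obtain ⟨q, hq⟩ := Submodule.exists_isCompl
        (K ∙ (Submodule.Quotient.mk (v n) : G ⧸ F n))
      set eq1 := LinearEquiv.toSpanNonzeroSingleton K (G ⧸ F n)
        (Submodule.Quotient.mk (v n)) hvq with heq1
      set φ' : (G ⧸ F n) →ₗ[K] K := LinearMap.ofIsCompl hq (eq1.symm : _ →ₗ[K] K) 0 with hφ'
      set φ : G →ₗ[K] K := φ'.comp (F n).mkQ with hφdef
      have hφF : ∀ x ∈ F n, φ x = 0 := by
        intro x hx
        have : (F n).mkQ x = 0 := (Submodule.Quotient.mk_eq_zero _).mpr hx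
        simp [hφdef, this]
      have hφv : φ (v n) = 1 := by
        have hmem1 : (Submodule.Quotient.mk (v n) : G ⧸ F n)
            ∈ (K ∙ (Submodule.Quotient.mk (v n) : G ⧸ F n)) :=
          Submodule.mem_span_singleton_self _
        have h2 : φ' (Submodule.Quotient.mk (v n)) = eq1.symm ⟨_, hmem1⟩ := by
          have := LinearMap.ofIsCompl_left_apply hq (φ := (eq1.symm : _ →ₗ[K] K))
            (ψ := (0 : ↥q →ₗ[K] K)) ⟨_, hmem1⟩
          simpa [hφ'] using this
        have h3 : eq1.symm ⟨_, hmem1⟩ = 1 := by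
          rw [LinearEquiv.symm_apply_eq]
          apply Subtype.ext
          simp [heq1]
        show φ' ((F n).mkQ (v n)) = 1
        rw [Submodule.mkQ_apply, h2, h3]
      set w := v n - u with hwdef
      set f' := f.comp (LinearMap.id - (φ.smulRight w)) with hf'def
      have hf'app : ∀ x, f' x = f (x - φ x • w) := fun x => rfl
      have hagree : ∀ x ∈ F n, f' x = f x := by
        intro x hx
        rw [hf'app, hφF x hx, zero_smul, sub_zero]
      have hrep : ∀ x ∈ F (n+1), ∃ g ∈ F n, ∃ a : K, x = g + a • v n := by
        intro x hx
        rw [hFsucc n] at hx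
        rcases Submodule.mem_sup.mp hx with ⟨g, hg, z, hz, hgz⟩
        rcases Submodule.mem_span_singleton.mp hz with ⟨a, ha⟩
        exact ⟨g, hg, a, by rw [← hgz, ← ha]⟩
      have hkey : ∀ x ∈ F (n+1), ∃ g ∈ F n, ∃ a : K,
          x = g + a • v n ∧ f' x = f (g + a • u) := by
        intro x hx
        obtain ⟨g, hg, a, hga⟩ := hrep x hx
        refine ⟨g, hg, a, hga, ?_⟩
        have hφx : φ x = a := by
          rw [hga, map_add, hφF g hg, map_smul, hφv, smul_eq_mul, mul_one, zero_add]
        rw [hf'app, hφx, hga, hwdef]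
        congr 1
        rw [smul_sub]; abel
      refine ⟨f', ⟨?_, ?_, ?_⟩, hagree⟩
      · intro x hx
        rw [hagree x (hSF n hx)]
        exact hfix x hx
      · intro x hx
        obtain ⟨g, hg, a, _, hfx⟩ := hkey x hx
        rw [hfx]
        exact hmem _ ((F n).add_mem hg ((F n).smul_mem a huF))
      · intro x hx
        obtain ⟨g, hg, a, hga, hfx⟩ := hkey x hx
        rcases eq_or_ne a 0 with rfl | ha
        · have hxF : x ∈ F n := by rw [hga]; simpa using hg
          rw [hagree x hxF]
          exact le_trans (hbd x hxF)
            (mul_le_mul_of_nonneg_right (hCmono n) (norm_nonneg x))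
        · have hmemgu : g + a • u ∈ F n := (F n).add_mem hg ((F n).smul_mem a huF)
          have hb1 : ‖f' x‖ ≤ C n * ‖g + a • u‖ := by rw [hfx]; exact hbd _ hmemgu
          have hrw : g + a • u = x + a • (u - v n) := by
            rw [hga, smul_sub]; abel
          have hb2 : ‖g + a • u‖ ≤ max ‖x‖ ‖a • (u - v n)‖ := by
            rw [hrw]; exact IsUltrametricDist.norm_add_le_max _ _
          have hb3 : ‖a • (u - v n)‖ ≤ Real.exp η * ‖x‖ := by
            rw [norm_smul]
            have hd1 : ‖u - v n‖ = dist (v n) u := by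
              rw [dist_eq_norm, ← norm_neg]; congr 1; abel
            have hd2 : ‖a‖ * ‖u - v n‖ ≤ ‖a‖ * (Real.exp η * δ) := by
              rw [hd1]
              exact mul_le_mul_of_nonneg_left (le_of_lt hud) (norm_nonneg a)
            have hd3 : ‖a‖ * δ ≤ ‖x‖ := by
              rw [hga]; exact aux_norm_ge (F n) (v n) a g hg
            calc ‖a‖ * ‖u - v n‖ ≤ ‖a‖ * (Real.exp η * δ) := hd2
              _ = Real.exp η * (‖a‖ * δ) := by ring
              _ ≤ Real.exp η * ‖x‖ :=
                mul_le_mul_of_nonneg_left hd3 (le_of_lt (Real.exp_pos η))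
          have hb4 : ‖g + a • u‖ ≤ Real.exp η * ‖x‖ := by
            refine le_trans hb2 (max_le ?_ hb3)
            nlinarith [norm_nonneg x, h1η]
          calc ‖f' x‖ ≤ C n * ‖g + a • u‖ := hb1
            _ ≤ C n * (Real.exp η * ‖x‖) := by
                refine mul_le_mul_of_nonneg_left hb4 ?_
                linarith [hC1 n]
            _ = (C n * Real.exp η) * ‖x‖ := by ring
            _ = C (n+1) * ‖x‖ := by rw [hCstep n]
  choose stepF stepP stepA using step
  let T : ∀ n : ℕ, {f : G →ₗ[K] G // Props n f} :=
    fun n => Nat.rec ⟨LinearMap.id, base⟩ (fun m p => ⟨stepF m p.1 p.2, stepP m p.1 p.2⟩) n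
  have compat : ∀ n, ∀ x ∈ F n, (T (n+1)).1 x = (T n).1 x := fun n => stepA n (T n).1 (T n).2
  have agree : ∀ n m, n ≤ m → ∀ x ∈ F n, (T m).1 x = (T n).1 x := by
    intro n m hnm
    induction m, hnm using Nat.le_induction with
    | base => intro x _; rfl
    | succ m hm ih =>
      intro x hx
      rw [compat m x (hFmono hm hx)]
      exact ih x hx
  set U : Submodule K G := ⨆ n, F n with hUdef
  have memU : ∀ x : G, x ∈ U → ∃ n, x ∈ F n := fun x hx =>
    (Submodule.mem_iSup_of_chain ⟨F, hFmono⟩ x).mp hx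
  have hFleU : ∀ n, F n ≤ U := fun n => le_iSup F n
  let nx : ↥U → ℕ := fun x => Nat.find (memU x x.2)
  have hnx : ∀ x : ↥U, (x : G) ∈ F (nx x) := fun x => Nat.find_spec (memU x x.2)
  have hval : ∀ (x : ↥U) (m : ℕ), (x : G) ∈ F m → (T m).1 x = (T (nx x)).1 x := by
    intro x m hm
    rcases le_total (nx x) m with h | h
    · exact agree _ _ h _ (hnx x)
    · exact (agree _ _ h _ hm).symm
  set f0 : ↥U → G := fun x => (T (nx x)).1 x with hf0def
  have f0add : ∀ x y : ↥U, f0 (x + y) = f0 x + f0 y := by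
    intro x y
    set N := max (nx (x + y)) (max (nx x) (nx y)) with hN
    have h1 : ((x + y : ↥U) : G) ∈ F N := hFmono (le_max_left _ _) (hnx (x + y))
    have h2 : (x : G) ∈ F N := hFmono (le_trans (le_max_left _ _) (le_max_right _ _)) (hnx x)
    have h3 : (y : G) ∈ F N := hFmono (le_trans (le_max_right _ _) (le_max_right _ _)) (hnx y)
    show (T (nx (x+y))).1 ((x + y : ↥U) : G) = (T (nx x)).1 (x : G) + (T (nx y)).1 (y : G)
    rw [← hval (x + y) N h1, ← hval x N h2, ← hval y N h3]
    show (T N).1 ((x : G) + (y : G)) = (T N).1 x + (T N).1 y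
    exact map_add _ _ _
  have f0smul : ∀ (c : K) (x : ↥U), f0 (c • x) = c • f0 x := by
    intro c x
    set N := max (nx (c • x)) (nx x) with hN
    have h1 : ((c • x : ↥U) : G) ∈ F N := hFmono (le_max_left _ _) (hnx (c • x))
    have h2 : (x : G) ∈ F N := hFmono (le_max_right _ _) (hnx x)
    show (T (nx (c • x))).1 ((c • x : ↥U) : G) = c • (T (nx x)).1 (x : G)
    rw [← hval (c • x) N h1, ← hval x N h2]
    show (T N).1 (c • (x : G)) = c • (T N).1 x
    exact map_smul _ _ _
  have f0S : ∀ x : ↥U, f0 x ∈ S := fun x => (T (nx x)).2.2.1 _ (hnx x)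
  have f0fix : ∀ x : ↥U, (x : G) ∈ S → f0 x = x := fun x hx => (T (nx x)).2.1 _ hx
  have f0bd : ∀ x : ↥U, ‖f0 x‖ ≤ Real.exp ε * ‖x‖ := by
    intro x
    refine le_trans ((T (nx x)).2.2.2 _ (hnx x)) ?_
    exact mul_le_mul_of_nonneg_right (hCle _) (norm_nonneg _)
  set fU : ↥U →ₗ[K] G :=
    { toFun := f0, map_add' := f0add, map_smul' := f0smul } with hfUdef
  set fU' : ↥U →L[K] G := fU.mkContinuous (Real.exp ε) f0bd with hfU'def
  have hUdense : Dense (U : Set G) := by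
    have hle : Submodule.span K s ≤ U := by
      have h0 : Submodule.span K s = Submodule.span K (Set.range v) := by
        rw [← hv, Submodule.span_insert_zero]
      rw [h0, Submodule.span_le]
      rintro _ ⟨k, rfl⟩
      refine hFleU (k+1) ?_
      have : v k ∈ v '' Set.Iio (k+1) := ⟨k, by simp, rfl⟩
      exact le_sup_right (α := Submodule K G) (Submodule.subset_span this)
    exact hsd.mono hle
  obtain ⟨P, hP⟩ := aux_extend U hUdense fU'
  have hPU : ∀ (y : G) (hy : y ∈ U), P y = f0 ⟨y, hy⟩ := fun y hy => hP ⟨y, hy⟩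
  refine ⟨P, ?_, ?_, ?_⟩
  · intro x hx
    have hxU : x ∈ U := hFleU 0 (hF0 ▸ hx)
    rw [hPU x hxU, f0fix ⟨x, hxU⟩ hx]
  · intro x
    have hclosed : IsClosed {y : G | P y ∈ S} := hS.preimage P.continuous
    have hsub : (U : Set G) ⊆ {y : G | P y ∈ S} := by
      intro y hy
      show P y ∈ S
      rw [hPU y hy]
      exact f0S _
    have hx : x ∈ closure (U : Set G) := hUdense x
    have := (closure_mono hsub) hx
    rwa [hclosed.closure_eq] at this
  · intro x
    have hclosed : IsClosed {y : G | ‖P y‖ ≤ Real.exp ε * ‖y‖} :=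
      isClosed_le (P.continuous.norm) (continuous_const.mul continuous_norm)
    have hsub : (U : Set G) ⊆ {y : G | ‖P y‖ ≤ Real.exp ε * ‖y‖} := by
      intro y hy
      show ‖P y‖ ≤ Real.exp ε * ‖y‖
      rw [hPU y hy]
      exact f0bd ⟨y, hy⟩
    have hx : x ∈ closure (U : Set G) := hUdense x
    have := (closure_mono hsub) hx
    rwa [hclosed.closure_eq] at this

end AuxB

set_option maxHeartbeats 1000000 in
/-- Let `(G,d₀)` be a countably generated nonarchimedean normed chain
complex over `K` with finite boundary depth `β`. Then `range d₀` is closed,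
`H := ker d₀ / range d₀` with the quotient norm is a nonarchimedean Banach space, and for
every `ε > 0` there are special deformation retraction data `(p, i, h)` from `(G, d₀)` to
`(H, 0)` such that `p` sends a cycle to its homology class, `‖p x‖ ≤ e^ε ‖x‖`,
`‖h x‖ ≤ e^{β+ε} ‖x‖` and `‖i z‖ ≤ e^ε ‖z‖`. -/
theorem exists_special_deformation_retraction_to_homology
    {K : Type*} [NormedField K] [IsUltrametricDist K] [CompleteSpace K]
    {G : Type*} [NormedAddCommGroup G] [NormedSpace K G] [CompleteSpace G]
    [IsUltrametricDist G]
    (hgen : ∃ s : Set G, s.Countable ∧ Dense ((Submodule.span K s : Submodule K G) : Set G))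
    (d : G →L[K] G) (hd2 : ∀ x, d (d x) = 0) (hd1 : ∀ x, ‖d x‖ ≤ ‖x‖)
    (β : ℝ) (hβ0 : 0 ≤ β) (hβ : boundaryDepth (fun x => d x) = ENNReal.ofReal β) :
    IsClosed (Set.range fun x : G => d x) ∧
    (∀ z : homologyOf d, ‖z‖ = 0 → z = 0) ∧
    (∀ z w : homologyOf d, ‖z + w‖ ≤ max ‖z‖ ‖w‖) ∧
    CompleteSpace (homologyOf d) ∧
    ∀ ε : ℝ, 0 < ε →
      ∃ (p : G →L[K] homologyOf d) (i : homologyOf d →L[K] G) (h : G →L[K] G),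
        (∀ (x : G) (hx : x ∈ LinearMap.ker (d : G →ₗ[K] G)),
          p x = (Submodule.Quotient.mk ⟨x, hx⟩ : homologyOf d)) ∧
        (∀ x : G, p (d x) = 0) ∧
        (∀ z : homologyOf d, d (i z) = 0) ∧
        (∀ z : homologyOf d, p (i z) = z) ∧
        (∀ x : G, x - i (p x) = h (d x) + d (h x)) ∧
        (∀ x : G, h (h x) = 0) ∧
        (∀ z : homologyOf d, h (i z) = 0) ∧
        (∀ x : G, p (h x) = 0) ∧
        (∀ x : G, ‖p x‖ ≤ Real.exp ε * ‖x‖) ∧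
        (∀ x : G, ‖h x‖ ≤ Real.exp (β + ε) * ‖x‖) ∧
        (∀ z : homologyOf d, ‖i z‖ ≤ Real.exp ε * ‖z‖) := by
  classical
  have sub_max : ∀ a b : G, ‖a - b‖ ≤ max ‖a‖ ‖b‖ := by
    intro a b
    rw [sub_eq_add_neg]
    simpa [norm_neg] using IsUltrametricDist.norm_add_le_max a (-b)
  set Z : Submodule K G := LinearMap.ker (d : G →ₗ[K] G) with hZdef
  set B : Submodule K G := LinearMap.range (d : G →ₗ[K] G) with hBdef
  have hBclosed : IsClosed ((B : Submodule K G) : Set G) := aux_closed_range d hd1 hβ0 hβ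
  have hZclosed : IsClosed ((Z : Submodule K G) : Set G) := by
    have hset : ((Z : Submodule K G) : Set G) = (fun x => d x) ⁻¹' {0} := by
      ext y; simp [hZdef, LinearMap.mem_ker]
    rw [hset]; exact isClosed_singleton.preimage d.continuous
  have hBZ : B ≤ Z := by
    intro y hy
    obtain ⟨x, hx⟩ := hy
    have : d y = 0 := by rw [← hx]; exact hd2 x
    exact LinearMap.mem_ker.mpr this
  have hrange_eq : (Set.range fun x : G => d x) = ((B : Submodule K G) : Set G) := by
    ext y
    constructor
    · rintro ⟨x, rfl⟩; exact ⟨x, rfl⟩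
    · rintro ⟨x, rfl⟩; exact ⟨x, rfl⟩
  haveI instZ : CompleteSpace ↥Z := hZclosed.completeSpace_coe
  set N : Submodule K ↥Z := Submodule.comap Z.subtype B with hNdef
  have hNclosed : IsClosed ((N : Submodule K ↥Z) : Set ↥Z) := by
    have hset : ((N : Submodule K ↥Z) : Set ↥Z) = (Subtype.val) ⁻¹' ((B : Submodule K G) : Set G) := rfl
    rw [hset]; exact hBclosed.preimage continuous_subtype_val
  refine ⟨by rw [hrange_eq]; exact hBclosed, ?_, ?_, ?_, ?_⟩
  · -- norm zero implies zero
    intro z hz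
    obtain ⟨m, rfl⟩ := Submodule.Quotient.mk_surjective N z
    rw [Submodule.Quotient.mk_eq_zero]
    have h0 : m ∈ closure ((N.toAddSubgroup : AddSubgroup ↥Z) : Set ↥Z) :=
      (QuotientAddGroup.norm_mk_eq_zero_iff_mem_closure (S := N.toAddSubgroup) (m := m)).mp hz
    have hcoe : ((N.toAddSubgroup : AddSubgroup ↥Z) : Set ↥Z) = (N : Set ↥Z) := rfl
    rw [hcoe, hNclosed.closure_eq] at h0
    exact h0
  · -- ultrametric inequality on homology
    intro z w
    refine le_of_forall_pos_le_add ?_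
    intro η hη
    obtain ⟨m1, hm1, hn1⟩ := Submodule.Quotient.norm_mk_lt z hη
    obtain ⟨m2, hm2, hn2⟩ := Submodule.Quotient.norm_mk_lt w hη
    have hsum : (Submodule.Quotient.mk (m1 + m2) : homologyOf d) = z + w := by
      rw [Submodule.Quotient.mk_add, hm1, hm2]
    have hult : ‖m1 + m2‖ ≤ max ‖m1‖ ‖m2‖ := by
      rw [Submodule.coe_norm, Submodule.coe_norm, Submodule.coe_norm]
      rw [Submodule.coe_add]
      exact IsUltrametricDist.norm_add_le_max _ _
    calc ‖z + w‖ = ‖(Submodule.Quotient.mk (m1 + m2) : homologyOf d)‖ := by rw [hsum]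
      _ ≤ ‖m1 + m2‖ := Submodule.Quotient.norm_mk_le _ _
      _ ≤ max ‖m1‖ ‖m2‖ := hult
      _ ≤ max (‖z‖ + η) (‖w‖ + η) := max_le_max (le_of_lt hn1) (le_of_lt hn2)
      _ = max ‖z‖ ‖w‖ + η := max_add_add_right _ _ _
  · -- completeness
    infer_instance
  · -- the retraction data
    intro ε hε
    have hε4 : 0 < ε / 4 := by linarith
    have hexp1 : (1:ℝ) ≤ Real.exp (ε / 4) := Real.one_le_exp (le_of_lt hε4)
    have hexppos : (0:ℝ) < Real.exp (ε / 4) := Real.exp_pos _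
    obtain ⟨P, Pfix, Pmem, Pbd⟩ := aux_exists_proj hgen Z hZclosed hε4
    obtain ⟨Q, Qfix, Qmem, Qbd⟩ := aux_exists_proj hgen B hBclosed hε4
    have PP : ∀ x, P (P x) = P x := fun x => Pfix _ (Pmem x)
    have PZ : ∀ x, d (P x) = 0 := fun x => Pmem x
    have hdZ : ∀ x, d x ∈ Z := fun x => LinearMap.mem_ker.mpr (hd2 x)
    have hdB : ∀ x, d x ∈ B := fun x => ⟨x, rfl⟩
    have PdZ : ∀ x, P (d x) = d x := fun x => Pfix _ (hdZ x)
    have QQ : ∀ x, Q (Q x) = Q x := fun x => Qfix _ (Qmem x)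
    have Qd : ∀ x, Q (d x) = d x := fun x => Qfix _ (hdB x)
    have QBZ : ∀ x, d (Q x) = 0 := fun x => hBZ (Qmem x)
    -- the inverse of d restricted to W := ker P
    set W : Submodule K G := LinearMap.ker (P : G →ₗ[K] G) with hWdef
    set dW : ↥W →ₗ[K] ↥B := LinearMap.codRestrict B ((d : G →ₗ[K] G).comp W.subtype)
      (fun w => hdB (w : G)) with hdWdef
    have hdWapp : ∀ w : ↥W, ((dW w : ↥B) : G) = d (w : G) := fun w => rfl
    have hdWinj : Function.Injective dW := by
      intro a b hab
      have h1 : d ((a : G)) = d ((b : G)) := by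
        have := congrArg (Subtype.val) hab
        rwa [hdWapp, hdWapp] at this
      have h2 : d ((a : G) - (b : G)) = 0 := by rw [map_sub, h1, sub_self]
      have h3 : P ((a : G) - (b : G)) = (a : G) - (b : G) :=
        Pfix _ (LinearMap.mem_ker.mpr h2)
      have ha : P (a : G) = 0 := a.2
      have hb : P (b : G) = 0 := b.2
      have h4 : P ((a : G) - (b : G)) = 0 := by rw [map_sub, ha, hb, sub_self]
      apply Subtype.ext
      have h5 : (a : G) - (b : G) = 0 := by rw [← h3, h4]
      exact sub_eq_zero.mp h5
    have hdWsurj : Function.Surjective dW := by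
      intro b
      obtain ⟨y, hy⟩ := b.2
      have hmemW : y - P y ∈ W := by
        have : P (y - P y) = 0 := by rw [map_sub, PP, sub_self]
        exact this
      refine ⟨⟨y - P y, hmemW⟩, ?_⟩
      apply Subtype.ext
      rw [hdWapp]
      show d (y - P y) = (b : G)
      rw [map_sub, PZ y, sub_zero]; exact hy
    set e : ↥W ≃ₗ[K] ↥B := LinearEquiv.ofBijective dW ⟨hdWinj, hdWsurj⟩ with hedef
    have heapp : ∀ w : ↥W, ((e w : ↥B) : G) = d (w : G) := fun w => rfl
    have esymm_eq : ∀ (y : G) (hy : d y ∈ B), ((e.symm ⟨d y, hy⟩ : ↥W) : G) = y - P y := by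
      intro y hy
      have hmemW : y - P y ∈ W := by
        have : P (y - P y) = 0 := by rw [map_sub, PP, sub_self]
        exact this
      have h5 : e ⟨y - P y, hmemW⟩ = ⟨d y, hy⟩ := by
        apply Subtype.ext
        rw [heapp]
        show d (y - P y) = d y
        rw [map_sub, PZ y, sub_zero]
      rw [← h5, LinearEquiv.symm_apply_apply]
    have d_esymm : ∀ b : ↥B, d ((e.symm b : ↥W) : G) = (b : G) := by
      intro b
      have h6 := congrArg (Subtype.val) (e.apply_symm_apply b)
      rwa [heapp] at h6
    have esymm_bd : ∀ b : ↥B,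
        ‖((e.symm b : ↥W) : G)‖ ≤ Real.exp (ε/4) * (Real.exp (β + ε/4) * ‖(b : G)‖) := by
      intro b
      rcases eq_or_ne ((b : G)) 0 with hb0 | hb0
      · have hz : b = 0 := Subtype.ext hb0
        rw [hz, map_zero]
        have h00 : ‖((0 : ↥W) : G)‖ = 0 := by simp
        rw [h00]
        positivity
      · have hxr : ∃ y, d y = (b : G) := b.2
        obtain ⟨y, hy, hyb⟩ := aux_depth (fun x : G => d x) hβ hβ0 hb0 hxr hε4
        have hbeq : (⟨d y, hdB y⟩ : ↥B) = b := Subtype.ext hy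
        rw [← hbeq, esymm_eq y (hdB y)]
        have h1 : ‖y - P y‖ ≤ max ‖y‖ ‖P y‖ := sub_max _ _
        have h2 : ‖y‖ ≤ Real.exp (ε/4) * ‖y‖ := le_mul_of_one_le_left (norm_nonneg _) hexp1
        have h3 : ‖y - P y‖ ≤ Real.exp (ε/4) * ‖y‖ := le_trans h1 (max_le h2 (Pbd y))
        refine le_trans h3 ?_
        have h4 : ((⟨d y, hdB y⟩ : ↥B) : G) = d y := rfl
        rw [h4, hy]
        exact mul_le_mul_of_nonneg_left hyb (le_of_lt hexppos)
    -- the three maps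
    set QP : G →ₗ[K] ↥B := LinearMap.codRestrict B
      ((Q : G →ₗ[K] G).comp (P : G →ₗ[K] G)) (fun x => Qmem (P x)) with hQPdef
    set h0 : G →ₗ[K] G := W.subtype.comp ((e.symm : ↥B →ₗ[K] ↥W).comp QP) with hh0def
    have h0app : ∀ x, h0 x = ((e.symm ⟨Q (P x), Qmem (P x)⟩ : ↥W) : G) := fun x => rfl
    have h0bd : ∀ x, ‖h0 x‖ ≤ Real.exp (β + ε) * ‖x‖ := by
      intro x
      rw [h0app]
      refine le_trans (esymm_bd ⟨Q (P x), Qmem (P x)⟩) ?_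
      have e1 : ‖Q (P x)‖ ≤ Real.exp (ε/4) * (Real.exp (ε/4) * ‖x‖) :=
        le_trans (Qbd (P x)) (mul_le_mul_of_nonneg_left (Pbd x) (le_of_lt hexppos))
      have e3 : Real.exp (ε/4) * (Real.exp (β + ε/4) * ‖((⟨Q (P x), Qmem (P x)⟩ : ↥B) : G)‖)
          ≤ Real.exp (ε/4) * (Real.exp (β + ε/4) * (Real.exp (ε/4) * (Real.exp (ε/4) * ‖x‖))) := by
        have h4 : ((⟨Q (P x), Qmem (P x)⟩ : ↥B) : G) = Q (P x) := rfl
        rw [h4]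
        gcongr
      refine le_trans e3 (le_of_eq ?_)
      have hconst : Real.exp (ε/4) * Real.exp (β + ε/4) * Real.exp (ε/4) * Real.exp (ε/4)
          = Real.exp (β + ε) := by
        rw [← Real.exp_add, ← Real.exp_add, ← Real.exp_add]
        congr 1
        ring
      have h5 : Real.exp (ε/4) * (Real.exp (β + ε/4) * (Real.exp (ε/4) * (Real.exp (ε/4) * ‖x‖)))
          = (Real.exp (ε/4) * Real.exp (β + ε/4) * Real.exp (ε/4) * Real.exp (ε/4)) * ‖x‖ := by
        ring
      rw [h5, hconst]
    set hC : G →L[K] G := h0.mkContinuous _ h0bd with hhCdef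
    have hCapp : ∀ x, hC x = h0 x := fun x => rfl
    set p0 : G →ₗ[K] homologyOf d := N.mkQ.comp (LinearMap.codRestrict Z (P : G →ₗ[K] G) Pmem)
      with hp0def
    have p0app : ∀ x, p0 x = Submodule.Quotient.mk (⟨P x, Pmem x⟩ : ↥Z) := fun x => rfl
    have p0bd : ∀ x, ‖p0 x‖ ≤ Real.exp ε * ‖x‖ := by
      intro x
      rw [p0app]
      refine le_trans (Submodule.Quotient.norm_mk_le _ _) ?_
      have h4 : ‖(⟨P x, Pmem x⟩ : ↥Z)‖ = ‖P x‖ := rfl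
      rw [h4]
      refine le_trans (Pbd x) ?_
      exact mul_le_mul_of_nonneg_right (Real.exp_le_exp.mpr (by linarith)) (norm_nonneg x)
    set p : G →L[K] homologyOf d := p0.mkContinuous _ p0bd with hpdef
    have papp : ∀ x, p x = p0 x := fun x => rfl
    set j : ↥Z →ₗ[K] G := Z.subtype - (Q : G →ₗ[K] G).comp Z.subtype with hjdef
    have hjapp : ∀ m : ↥Z, j m = (m : G) - Q (m : G) := fun m => rfl
    have hjker : N ≤ LinearMap.ker j := by
      intro m hm
      have hmB : (m : G) ∈ B := hm
      refine LinearMap.mem_ker.mpr ?_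
      rw [hjapp, Qfix _ hmB, sub_self]
    set i0 : homologyOf d →ₗ[K] G := N.liftQ j hjker with hi0def
    have i0app : ∀ m : ↥Z, i0 (Submodule.Quotient.mk m) = (m : G) - Q (m : G) := by
      intro m
      rw [hi0def, Submodule.liftQ_apply, hjapp]
    have i0bd : ∀ z, ‖i0 z‖ ≤ Real.exp (ε/4) * ‖z‖ := by
      intro z
      refine le_of_forall_pos_le_add ?_
      intro η hη
      obtain ⟨m, hm, hmn⟩ := Submodule.Quotient.norm_mk_lt z (div_pos hη hexppos)
      have hval : ‖i0 z‖ = ‖(m : G) - Q (m : G)‖ := by rw [← hm, i0app]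
      have h1 : ‖(m : G) - Q (m : G)‖ ≤ max ‖(m : G)‖ ‖Q (m : G)‖ := sub_max _ _
      have h2 : ‖(m : G)‖ ≤ Real.exp (ε/4) * ‖(m : G)‖ :=
        le_mul_of_one_le_left (norm_nonneg _) hexp1
      have h3 : ‖(m : G)‖ = ‖m‖ := rfl
      calc ‖i0 z‖ ≤ Real.exp (ε/4) * ‖(m : G)‖ := by
            rw [hval]; exact le_trans h1 (max_le h2 (Qbd _))
        _ = Real.exp (ε/4) * ‖m‖ := by rw [h3]
        _ ≤ Real.exp (ε/4) * (‖z‖ + η / Real.exp (ε/4)) :=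
            mul_le_mul_of_nonneg_left (le_of_lt hmn) (le_of_lt hexppos)
        _ = Real.exp (ε/4) * ‖z‖ + η := by field_simp
    set i : homologyOf d →L[K] G := i0.mkContinuous _ i0bd with hidef
    have iapp : ∀ z, i z = i0 z := fun z => rfl
    have hPh0 : ∀ x, P (h0 x) = 0 := by
      intro x
      have hmem : h0 x ∈ W := by
        rw [h0app]
        exact Subtype.coe_prop _
      exact hmem
    refine ⟨p, i, hC, ?_, ?_, ?_, ?_, ?_, ?_, ?_, ?_, ?_, ?_, ?_⟩
    · -- p of a cycle
      intro x hx
      rw [papp, p0app]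
      exact congrArg _ (Subtype.ext (Pfix x hx))
    · -- p (d x) = 0
      intro x
      rw [papp, p0app]
      have h1 : (⟨P (d x), Pmem (d x)⟩ : ↥Z) = ⟨d x, hdZ x⟩ := Subtype.ext (PdZ x)
      rw [h1, Submodule.Quotient.mk_eq_zero]
      exact Submodule.mem_comap.mpr (hdB x)
    · -- d (i z) = 0
      intro z
      obtain ⟨m, rfl⟩ := Submodule.Quotient.mk_surjective N z
      rw [iapp, i0app, map_sub]
      have h1 : d (m : G) = 0 := m.2
      rw [h1, QBZ, sub_self]
    · -- p (i z) = z
      intro z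
      obtain ⟨m, rfl⟩ := Submodule.Quotient.mk_surjective N z
      rw [iapp, i0app, papp, p0app]
      have hmemZ : (m : G) - Q (m : G) ∈ Z := by
        refine LinearMap.mem_ker.mpr ?_
        rw [ContinuousLinearMap.coe_coe, map_sub]
        have h1 : d (m : G) = 0 := m.2
        rw [h1, QBZ, sub_self]
      have h2 : (⟨P ((m : G) - Q (m : G)), Pmem _⟩ : ↥Z) = ⟨(m : G) - Q (m : G), hmemZ⟩ :=
        Subtype.ext (Pfix _ hmemZ)
      rw [h2]
      have hQZ : Q (m : G) ∈ Z := hBZ (Qmem _)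
      have h3 : (⟨(m : G) - Q (m : G), hmemZ⟩ : ↥Z) = m - ⟨Q (m : G), hQZ⟩ := Subtype.ext rfl
      rw [h3, Submodule.Quotient.mk_sub]
      have h4 : (Submodule.Quotient.mk (⟨Q (m : G), hQZ⟩ : ↥Z) : homologyOf d) = 0 :=
        (Submodule.Quotient.mk_eq_zero _).mpr (Submodule.mem_comap.mpr (Qmem _))
      rw [h4, sub_zero]
    · -- homotopy identity
      intro x
      have hA : hC (d x) = x - P x := by
        rw [hCapp, h0app]
        have h1 : (⟨Q (P (d x)), Qmem (P (d x))⟩ : ↥B) = ⟨d x, hdB x⟩ := by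
          apply Subtype.ext
          show Q (P (d x)) = d x
          rw [PdZ, Qd]
        rw [h1, esymm_eq x (hdB x)]
      have hB' : d (hC x) = Q (P x) := by
        rw [hCapp, h0app]
        exact d_esymm ⟨Q (P x), Qmem (P x)⟩
      have hc : i (p x) = P x - Q (P x) := by
        rw [papp, p0app, iapp, i0app]
      rw [hA, hB', hc]
      abel
    · -- h (h x) = 0
      intro x
      rw [hCapp x, hCapp, h0app]
      have h1 : (⟨Q (P (h0 x)), Qmem (P (h0 x))⟩ : ↥B) = 0 := by
        apply Subtype.ext
        show Q (P (h0 x)) = 0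
        rw [hPh0, map_zero]
      rw [h1, map_zero]
      simp
    · -- h (i z) = 0
      intro z
      obtain ⟨m, rfl⟩ := Submodule.Quotient.mk_surjective N z
      rw [iapp, i0app, hCapp, h0app]
      have hmemZ : (m : G) - Q (m : G) ∈ Z := by
        refine LinearMap.mem_ker.mpr ?_
        rw [ContinuousLinearMap.coe_coe, map_sub]
        have h1' : d (m : G) = 0 := m.2
        rw [h1', QBZ, sub_self]
      have h1 : (⟨Q (P ((m : G) - Q (m : G))), Qmem _⟩ : ↥B) = 0 := by
        apply Subtype.ext
        show Q (P ((m : G) - Q (m : G))) = 0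
        rw [Pfix _ hmemZ, map_sub, QQ, sub_self]
      rw [h1, map_zero]
      simp
    · -- p (h x) = 0
      intro x
      rw [hCapp, papp, p0app]
      have h1 : (⟨P (h0 x), Pmem _⟩ : ↥Z) = 0 := by
        apply Subtype.ext
        show P (h0 x) = 0
        exact hPh0 x
      rw [h1]
      exact (Submodule.Quotient.mk_eq_zero _).mpr (Submodule.zero_mem N)
    · -- norm of p
      intro x
      rw [papp]
      exact p0bd x
    · -- norm of h
      intro x
      rw [hCapp]
      exact h0bd x
    · -- norm of i
      intro z
      rw [iapp]
      refine le_trans (i0bd z) ?_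
      exact mul_le_mul_of_nonneg_right (Real.exp_le_exp.mpr (by linarith)) (norm_nonneg z)
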